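/- Any two directed gashes in the same class have the same aura: if h ∈ [g], then A(h) = A(g) in ℂ[δ₀,δ₁,δ₂]. -/
import Mathlib


/-!
STATEMENT 11: Any two directed gashes in the same class have the same aura.
The aura of a semi-labeled edge is hypothesized as a function A, determined
by: for a simple label it is δ_a times the unit normal pointing to the side
of the label, and for every valid triangular puzzle piece the auras of its
three sides, with labels placed inside, sum to zero.
-/

set_option maxHeartbeats 1000000

open scoped Classical

/-- Puzzle labels are encoded as natural numbers; the meaningful ones are
0–7, and 0, 1, 2 are the *simple* labels. -/
abbrev Label := ℕ

/-- The valid upward triangular puzzle pieces in standard position,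
as (left, right, bottom) label triples. -/
def basePieces : List (Label × Label × Label) :=
  [(0,0,0), (1,1,1), (2,2,2), (0,1,3), (1,2,4), (0,2,5), (3,2,6), (0,4,7)]

/-- Valid upward triangular pieces: the base list together with its
120° and 240° rotations. -/
def ValidUp (l r b : Label) : Prop :=
  (l, r, b) ∈ basePieces ∨ (r, b, l) ∈ basePieces ∨ (b, l, r) ∈ basePieces

/-- Valid downward triangular pieces, with (left, right, top) labels:
precisely the rotations (by 60°, 180° or 300°) of valid upward pieces. -/
def ValidDown (l r t : Label) : Prop := ValidUp r l t

/-- Valid *vertical* equivariant (rhombus) puzzle pieces: opposite sides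
carry equal labels, and `ValidEquivVert p q` means that the NW and SE sides
carry `p` while the NE and SW sides carry `q`, where `(p, q)` runs through
the paper's list of label pairs in its fixed orientation. -/
def ValidEquivVert (p q : Label) : Prop :=
  (p, q) ∈ ([(0,1), (1,2), (0,2), (2,3), (0,4), (3,4), (0,6), (2,7)] :
    List (Label × Label))

/-- A directed gash, recorded without its location in a puzzle: `dir : Fin 6`
encodes the orientation of the underlying lattice edge together with the
perpendicular direction of the gash, as the unit normal vector
`exp (π i (2 dir + 1) / 6)` pointing towards the side of the original label;
`orig` and `new` are the original and the new label. -/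
structure PreGash where
  dir : Fin 6
  orig : Label
  new : Label
deriving DecidableEq

/-- `g` is an honest directed gash: its two labels are distinct puzzle
labels (hence there are 6 · 8 · 7 = 336 directed gashes). -/
def IsDGash (g : PreGash) : Prop := g.orig ≠ g.new ∧ g.orig < 8 ∧ g.new < 8

/-- Immediate reachability: `h` is obtained from `g` by propagating `g`
across one triangular puzzle piece.  Normal directions: `1`/`5`/`3` point
into an upward triangle through its bottom/left/right side, and `4`/`0`/`2`
point into a downward triangle through its top/left/right side; the piece
`q` carries the original label of `g` on the gashed side, its replacement
`q'` carries the new label there, `q` and `q'` agree on exactly one further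
side, and `h` sits on the remaining side, with original label from `q` and
new label from `q'`, directed away from the replaced piece. -/
def Imm (g h : PreGash) : Prop :=
  (g.dir = 1 ∧ ∃ l r r', ValidUp l r g.orig ∧ ValidUp l r' g.new ∧ r ≠ r' ∧ h = ⟨0, r, r'⟩) ∨
  (g.dir = 1 ∧ ∃ l l' r, ValidUp l r g.orig ∧ ValidUp l' r g.new ∧ l ≠ l' ∧ h = ⟨2, l, l'⟩) ∨
  (g.dir = 5 ∧ ∃ r b b', ValidUp g.orig r b ∧ ValidUp g.new r b' ∧ b ≠ b' ∧ h = ⟨4, b, b'⟩) ∨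
  (g.dir = 5 ∧ ∃ r r' b, ValidUp g.orig r b ∧ ValidUp g.new r' b ∧ r ≠ r' ∧ h = ⟨0, r, r'⟩) ∨
  (g.dir = 3 ∧ ∃ l b b', ValidUp l g.orig b ∧ ValidUp l g.new b' ∧ b ≠ b' ∧ h = ⟨4, b, b'⟩) ∨
  (g.dir = 3 ∧ ∃ l l' b, ValidUp l g.orig b ∧ ValidUp l' g.new b ∧ l ≠ l' ∧ h = ⟨2, l, l'⟩) ∨
  (g.dir = 4 ∧ ∃ l r r', ValidDown l r g.orig ∧ ValidDown l r' g.new ∧ r ≠ r' ∧ h = ⟨5, r, r'⟩) ∨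
  (g.dir = 4 ∧ ∃ l l' r, ValidDown l r g.orig ∧ ValidDown l' r g.new ∧ l ≠ l' ∧ h = ⟨3, l, l'⟩) ∨
  (g.dir = 0 ∧ ∃ r t t', ValidDown g.orig r t ∧ ValidDown g.new r t' ∧ t ≠ t' ∧ h = ⟨1, t, t'⟩) ∨
  (g.dir = 0 ∧ ∃ r r' t, ValidDown g.orig r t ∧ ValidDown g.new r' t ∧ r ≠ r' ∧ h = ⟨5, r, r'⟩) ∨
  (g.dir = 2 ∧ ∃ l t t', ValidDown l g.orig t ∧ ValidDown l g.new t' ∧ t ≠ t' ∧ h = ⟨1, t, t'⟩) ∨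
  (g.dir = 2 ∧ ∃ l l' t, ValidDown l g.orig t ∧ ValidDown l' g.new t ∧ l ≠ l' ∧ h = ⟨3, l, l'⟩)

/-- The class `[g]` of a directed gash: all directed gashes reachable from
`g` by finitely many steps of immediate reachability. -/
def classOf (g : PreGash) : Set PreGash := {h | Relation.ReflTransGen Imm g h}

/-- The opposite gash: interchange the two labels, keep the direction. -/
def PreGash.opp (g : PreGash) : PreGash := ⟨g.dir, g.new, g.orig⟩

/-- `g` and `h` are in opposite classes. -/
def OppClasses (g h : PreGash) : Prop := classOf g.opp = classOf h

open MvPolynomial in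
/-- The ring ℂ[δ₀, δ₁, δ₂] in which auras live. -/
abbrev DRing := MvPolynomial (Fin 3) ℂ

/-- ζ = exp(π i / 6). -/
noncomputable def zet : ℂ := Complex.exp ((Real.pi : ℂ) * Complex.I / 6)

/-- The δ-variable attached to a simple label. -/
noncomputable def dvar (a : Label) : DRing :=
  if h : a < 3 then MvPolynomial.X (⟨a, h⟩ : Fin 3) else 0

/-- `A k a` is the aura of a semi-labeled edge carrying the label `a`, whose
unit normal `zet ^ (2k+1)` points to the side of the label.  `AuraSimple`
says that for a simple label the aura is `δ_a` times this unit normal. -/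
def AuraSimple (A : Fin 6 → Label → DRing) : Prop :=
  ∀ (k : Fin 6) (a : Label), a < 3 →
    A k a = MvPolynomial.C (zet ^ (2 * (k : ℕ) + 1)) * dvar a

/-- For every valid triangular puzzle piece the auras of its three sides,
with labels placed inside the piece, sum to zero (for both the upward and
the downward rotations of the piece). -/
def AuraPiece (A : Fin 6 → Label → DRing) : Prop :=
  ∀ l r b, ValidUp l r b →
    A 5 l + A 3 r + A 1 b = 0 ∧ A 0 r + A 2 l + A 4 b = 0

/-- The aura of a directed gash: the sum of the auras of its two
semi-labeled edges. -/
noncomputable def gashAura (A : Fin 6 → Label → DRing) (g : PreGash) : DRing :=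
  A g.dir g.orig + A (g.dir + 3) g.new


lemma zet_pow_six : zet ^ 6 = -1 := by
  have h : zet ^ 6 = Complex.exp ((Real.pi : ℂ) * Complex.I) := by
    unfold zet
    rw [← Complex.exp_nat_mul]
    congr 1
    push_cast
    ring
  rw [h, Complex.exp_pi_mul_I]

/-- The three "opposite normal" relations for a label. -/
def Opp3 (A : Fin 6 → Label → DRing) (a : Label) : Prop :=
  A 0 a + A 3 a = 0 ∧ A 1 a + A 4 a = 0 ∧ A 2 a + A 5 a = 0

lemma opp_simple (A : Fin 6 → Label → DRing) (hA : AuraSimple A) {a : Label}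
    (ha : a < 3) : Opp3 A a := by
  have h6 := zet_pow_six
  have h7 : zet ^ 7 = -zet ^ 1 := by linear_combination zet * h6
  have h9 : zet ^ 9 = -zet ^ 3 := by linear_combination zet ^ 3 * h6
  have h11 : zet ^ 11 = -zet ^ 5 := by linear_combination zet ^ 5 * h6
  refine ⟨?_, ?_, ?_⟩
  · rw [hA 0 a ha, hA 3 a ha]
    show MvPolynomial.C (zet ^ 1) * dvar a + MvPolynomial.C (zet ^ 7) * dvar a = 0
    rw [h7, map_neg]; ring
  · rw [hA 1 a ha, hA 4 a ha]
    show MvPolynomial.C (zet ^ 3) * dvar a + MvPolynomial.C (zet ^ 9) * dvar a = 0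
    rw [h9, map_neg]; ring
  · rw [hA 2 a ha, hA 5 a ha]
    show MvPolynomial.C (zet ^ 5) * dvar a + MvPolynomial.C (zet ^ 11) * dvar a = 0
    rw [h11, map_neg]; ring

lemma validUp_rot {x y c : Label} (h : ValidUp x y c) : ValidUp c x y := by
  unfold ValidUp at *; tauto

lemma validUp_lt {l r b : Label} (h : ValidUp l r b) : l < 8 ∧ r < 8 ∧ b < 8 := by
  rcases h with h | h | h <;>
  · simp only [basePieces, List.mem_cons, List.not_mem_nil, or_false,
      Prod.mk.injEq] at h
    rcases h with ⟨rfl,rfl,rfl⟩|⟨rfl,rfl,rfl⟩|⟨rfl,rfl,rfl⟩|⟨rfl,rfl,rfl⟩|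
      ⟨rfl,rfl,rfl⟩|⟨rfl,rfl,rfl⟩|⟨rfl,rfl,rfl⟩|⟨rfl,rfl,rfl⟩ <;>
      exact ⟨by norm_num, by norm_num, by norm_num⟩

lemma opp_piece (A : Fin 6 → Label → DRing) (hP : AuraPiece A) {x y c : Label}
    (hv : ValidUp x y c) (hx : Opp3 A x) (hy : Opp3 A y) : Opp3 A c := by
  obtain ⟨e1, e2⟩ := hP x y c hv
  obtain ⟨e3, e4⟩ := hP c x y (validUp_rot hv)
  obtain ⟨e5, e6⟩ := hP y c x (validUp_rot (validUp_rot hv))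
  refine ⟨?_, ?_, ?_⟩
  · linear_combination e5 + e6 - hy.2.2 - hx.2.1
  · linear_combination e1 + e2 - hx.2.2 - hy.1
  · linear_combination e3 + e4 - hx.1 - hy.2.1

lemma opp_all (A : Fin 6 → Label → DRing) (hA : AuraSimple A) (hP : AuraPiece A)
    {a : Label} (ha : a < 8) : Opp3 A a := by
  have o0 : Opp3 A 0 := opp_simple A hA (by norm_num)
  have o1 : Opp3 A 1 := opp_simple A hA (by norm_num)
  have o2 : Opp3 A 2 := opp_simple A hA (by norm_num)
  have o3 : Opp3 A 3 := opp_piece A hP (Or.inl (by decide)) o0 o1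
  have o4 : Opp3 A 4 := opp_piece A hP (Or.inl (by decide)) o1 o2
  have o5 : Opp3 A 5 := opp_piece A hP (Or.inl (by decide)) o0 o2
  have o6 : Opp3 A 6 := opp_piece A hP (Or.inl (by decide)) o3 o2
  have o7 : Opp3 A 7 := opp_piece A hP (Or.inl (by decide)) o0 o4
  interval_cases a <;> assumption

lemma imm_aura (A : Fin 6 → Label → DRing) (hA : AuraSimple A) (hP : AuraPiece A)
    {g h : PreGash} (him : Imm g h) : gashAura A h = gashAura A g := by
  obtain ⟨d, O, N⟩ := g
  have oppa : ∀ {a : Label}, a < 8 → Opp3 A a := fun ha => opp_all A hA hP ha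
  rcases him with ⟨hd, l, r, r', h1, h2, hne, rfl⟩ | ⟨hd, l, l', r, h1, h2, hne, rfl⟩ |
    ⟨hd, r, b, b', h1, h2, hne, rfl⟩ | ⟨hd, r, r', b, h1, h2, hne, rfl⟩ |
    ⟨hd, l, b, b', h1, h2, hne, rfl⟩ | ⟨hd, l, l', b, h1, h2, hne, rfl⟩ |
    ⟨hd, l, r, r', h1, h2, hne, rfl⟩ | ⟨hd, l, l', r, h1, h2, hne, rfl⟩ |
    ⟨hd, r, t, t', h1, h2, hne, rfl⟩ | ⟨hd, r, r', t, h1, h2, hne, rfl⟩ |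
    ⟨hd, l, t, t', h1, h2, hne, rfl⟩ | ⟨hd, l, l', t, h1, h2, hne, rfl⟩ <;>
    simp only at hd <;> subst hd <;>
    obtain ⟨b1a, b1b, b1c⟩ := validUp_lt h1 <;>
    obtain ⟨b2a, b2b, b2c⟩ := validUp_lt h2 <;>
    obtain ⟨e1, e2⟩ := hP _ _ _ h1 <;>
    obtain ⟨e3, e4⟩ := hP _ _ _ h2 <;>
    simp only [gashAura]
  · show A 0 r + A 3 r' = A 1 O + A 4 N
    linear_combination (e2 - e4) + (oppa b2b).1 - (oppa b1c).2.1
  · show A 2 l + A 5 l' = A 1 O + A 4 N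
    linear_combination (e2 - e4) + (oppa b2a).2.2 - (oppa b1c).2.1
  · show A 4 b + A 1 b' = A 5 O + A 2 N
    linear_combination (e3 - e1) + (oppa b1c).2.1 - (oppa b2a).2.2
  · show A 0 r + A 3 r' = A 5 O + A 2 N
    linear_combination (e3 - e1) + (oppa b1b).1 - (oppa b2a).2.2
  · show A 4 b + A 1 b' = A 3 O + A 0 N
    linear_combination (e3 - e1) + (oppa b1c).2.1 - (oppa b2b).1
  · show A 2 l + A 5 l' = A 3 O + A 0 N
    linear_combination (e2 - e4) + (oppa b2a).2.2 - (oppa b1b).1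
  · show A 5 r + A 2 r' = A 4 O + A 1 N
    linear_combination (e1 - e3) + (oppa b2a).2.2 - (oppa b1c).2.1
  · show A 3 l + A 0 l' = A 4 O + A 1 N
    linear_combination (e1 - e3) + (oppa b2b).1 - (oppa b1c).2.1
  · show A 1 t + A 4 t' = A 0 O + A 3 N
    linear_combination (e1 - e3) + (oppa b2c).2.1 - (oppa b1b).1
  · show A 5 r + A 2 r' = A 0 O + A 3 N
    linear_combination (e1 - e3) + (oppa b2a).2.2 - (oppa b1b).1
  · show A 1 t + A 4 t' = A 2 O + A 5 N
    linear_combination (e1 - e3) + (oppa b2c).2.1 - (oppa b1a).2.2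
  · show A 3 l + A 0 l' = A 2 O + A 5 N
    linear_combination (e4 - e2) + (oppa b1b).1 - (oppa b2a).2.2

theorem aura_constant_on_classes (A : Fin 6 → Label → DRing)
    (hA : AuraSimple A) (hP : AuraPiece A)
    (g h : PreGash) (hg : IsDGash g) (hh : h ∈ classOf g) :
    gashAura A h = gashAura A g := by
  induction hh with
  | refl => rfl
  | tail _ hbc ih => rw [imm_aura A hA hP hbc, ih]
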